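/- Let C1 ≥ C2 > 0. The compression capacity of the model (01;C1,C2;f) equals (C1 − C2)·log_3 2 + C2. That is, the supremum, over all positive integers k and all admissible k-shot codes (φ1, φ2), of the rate k / max(⌈log|Im φ1| / C1⌉, ⌈log|Im φ2| / C2⌉) equals (C1 − C2)·log_3 2 + C2. -/

import Mathlib

/-!
Statement 9: Let C1 ≥ C2 > 0. The compression capacity of the model (01;C1,C2;f), where
encoder 1 observes both sources, encoder 2 observes only y, and the target function is the
binary arithmetic sum f(x,y) = x + y, equals (C1 − C2)·log_3 2 + C2.
Encoders are maps with finite image; WLOG into ℕ.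
-/

/-- The componentwise integer sum of two binary vectors. -/
def vsum {k : ℕ} (x y : Fin k → Fin 2) : Fin k → ℕ := fun i => (x i : ℕ) + (y i : ℕ)

/-- The cardinality of the image of an encoding map defined on `A^k × A^k`. -/
def imCard1 {k : ℕ} (φ : (Fin k → Fin 2) × (Fin k → Fin 2) → ℕ) : ℕ :=
  (Finset.univ.image φ).card

/-- The cardinality of the image of an encoding map defined on `A^k`. -/
def imCard2 {k : ℕ} (φ : (Fin k → Fin 2) → ℕ) : ℕ := (Finset.univ.image φ).card

/-- Admissibility for the model (01;C1,C2;f): there is a decoder that recovers `x + y`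
with zero error from the encoder outputs `φ1 (x, y)` and `φ2 y`. -/
def Admissible01 {k : ℕ} (φ1 : (Fin k → Fin 2) × (Fin k → Fin 2) → ℕ)
    (φ2 : (Fin k → Fin 2) → ℕ) : Prop :=
  ∃ ψ : ℕ → ℕ → (Fin k → ℕ), ∀ x y : Fin k → Fin 2, ψ (φ1 (x, y)) (φ2 y) = vsum x y

/-- The rate of a k-shot code: `k / max(⌈log|Im φ1| / C1⌉, ⌈log|Im φ2| / C2⌉)`,
logarithms in base 2. -/
noncomputable def rate01 (C1 C2 : ℝ) {k : ℕ}
    (φ1 : (Fin k → Fin 2) × (Fin k → Fin 2) → ℕ) (φ2 : (Fin k → Fin 2) → ℕ) : ℝ :=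
  (k : ℝ) /
    ((max ⌈Real.logb 2 (imCard1 φ1) / C1⌉ ⌈Real.logb 2 (imCard2 φ2) / C2⌉ : ℤ) : ℝ)

noncomputable def cExp : ℝ := Real.logb 2 3 - 1

lemma l3_gt_one : (1:ℝ) < Real.logb 2 3 := by
  have := Real.logb_lt_logb (b := 2) (by norm_num) (by norm_num : (0:ℝ) < 2) (by norm_num : (2:ℝ) < 3)
  simpa using this

lemma l3_lt_two : Real.logb 2 3 < 2 := by
  have := Real.logb_lt_logb (b := 2) (by norm_num) (by norm_num : (0:ℝ) < 3) (by norm_num : (3:ℝ) < 4)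
  have h4 : Real.logb 2 4 = 2 := by
    rw [show (4:ℝ) = 2^(2:ℕ) by norm_num, Real.logb_pow]
    simp
  linarith [this, h4]

lemma cExp_pos : 0 < cExp := by unfold cExp; linarith [l3_gt_one]
lemma cExp_lt_one : cExp < 1 := by unfold cExp; linarith [l3_lt_two]

lemma rpow2_cExp : (2:ℝ) ^ cExp = 3/2 := by
  unfold cExp
  rw [Real.rpow_sub (by norm_num), Real.rpow_logb (by norm_num) (by norm_num) (by norm_num)]
  norm_num

noncomputable def gfun : ℝ → ℝ := fun t => 2 + t ^ cExp - 2 * (1+t) ^ cExp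

lemma gfun_zero : gfun 0 = 0 := by
  unfold gfun
  rw [Real.zero_rpow cExp_pos.ne']
  norm_num

lemma gfun_one : gfun 1 = 0 := by
  unfold gfun
  rw [Real.one_rpow]
  norm_num [rpow2_cExp]

lemma gfun_hasDeriv (t : ℝ) (ht : 0 < t) :
    HasDerivAt gfun (cExp * t^(cExp-1) - 2 * (cExp * (1+t)^(cExp-1))) t := by
  have h1 : HasDerivAt (fun x : ℝ => x ^ cExp) (cExp * t ^ (cExp-1)) t :=
    Real.hasDerivAt_rpow_const (Or.inl ht.ne')
  have h2' : HasDerivAt (fun x : ℝ => (1:ℝ) + x) 1 t := (hasDerivAt_id t).const_add 1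
  have h2 : HasDerivAt (fun x : ℝ => (1+x) ^ cExp) (cExp * (1+t)^(cExp-1) * 1) t :=
    (Real.hasDerivAt_rpow_const (x := 1+t) (p := cExp) (Or.inl (by linarith))).comp t h2'
  have := ((hasDerivAt_const t (2:ℝ)).add h1).sub (h2.const_mul 2)
  convert this using 1
  exacts [rfl, rfl, rfl, by ring]

noncomputable def Dc : ℝ := (2:ℝ) ^ ((1:ℝ)/(1-cExp))
noncomputable def tstar : ℝ := 1 / (Dc - 1)

lemma Dc_gt_two : 2 < Dc := by
  have h1 : (1:ℝ) < 1/(1-cExp) := by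
    rw [lt_div_iff₀ (by linarith [cExp_lt_one])]
    linarith [cExp_pos]
  calc (2:ℝ) = 2 ^ (1:ℝ) := by norm_num
  _ < Dc := by
      unfold Dc
      exact Real.rpow_lt_rpow_of_exponent_lt (by norm_num) h1

lemma tstar_pos : 0 < tstar := by
  unfold tstar
  have := Dc_gt_two
  have : 0 < Dc - 1 := by linarith
  positivity

lemma tstar_lt_one : tstar < 1 := by
  unfold tstar
  rw [div_lt_one (by linarith [Dc_gt_two])]
  linarith [Dc_gt_two]

lemma dpow : Dc ^ (1 - cExp) = 2 := by
  unfold Dc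
  rw [← Real.rpow_mul (by norm_num), one_div_mul_cancel (by linarith [cExp_lt_one]), Real.rpow_one]

lemma comp_lt (t : ℝ) (ht : 0 < t) (h : Dc * t < 1 + t) :
    2 * (1+t)^(cExp-1) < t^(cExp-1) := by
  have hDc : (0:ℝ) < Dc := by linarith [Dc_gt_two]
  have hd : 0 < 1 - cExp := by linarith [cExp_lt_one]
  have h1 : (Dc * t) ^ (1 - cExp) < (1+t) ^ (1-cExp) :=
    Real.rpow_lt_rpow (by positivity) h hd
  have h2 : (Dc * t) ^ (1-cExp) = 2 * t ^ (1-cExp) := by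
    rw [Real.mul_rpow hDc.le ht.le, dpow]
  rw [h2] at h1
  have e1 : t ^ (cExp-1) = (t ^ (1-cExp))⁻¹ := by
    rw [← Real.rpow_neg ht.le]; ring_nf
  have e2 : (1+t) ^ (cExp-1) = ((1+t) ^ (1-cExp))⁻¹ := by
    rw [← Real.rpow_neg (by linarith)]; ring_nf
  rw [e1, e2]
  have p1 : 0 < t ^ (1-cExp) := Real.rpow_pos_of_pos ht _
  have p2 : 0 < (1+t) ^ (1-cExp) := Real.rpow_pos_of_pos (by linarith) _
  rw [show 2 * ((1+t)^(1-cExp))⁻¹ = 2/((1+t)^(1-cExp)) by ring,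
      show (t^(1-cExp))⁻¹ = 1/(t^(1-cExp)) by ring, div_lt_div_iff₀ p2 p1]
  linarith

lemma comp_gt (t : ℝ) (ht : 0 < t) (h : 1 + t < Dc * t) :
    t^(cExp-1) < 2 * (1+t)^(cExp-1) := by
  have hDc : (0:ℝ) < Dc := by linarith [Dc_gt_two]
  have hd : 0 < 1 - cExp := by linarith [cExp_lt_one]
  have h1 : (1+t) ^ (1-cExp) < (Dc * t) ^ (1 - cExp) :=
    Real.rpow_lt_rpow (by positivity) h hd
  have h2 : (Dc * t) ^ (1-cExp) = 2 * t ^ (1-cExp) := by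
    rw [Real.mul_rpow hDc.le ht.le, dpow]
  rw [h2] at h1
  have e1 : t ^ (cExp-1) = (t ^ (1-cExp))⁻¹ := by
    rw [← Real.rpow_neg ht.le]; ring_nf
  have e2 : (1+t) ^ (cExp-1) = ((1+t) ^ (1-cExp))⁻¹ := by
    rw [← Real.rpow_neg (by linarith)]; ring_nf
  rw [e1, e2]
  have p1 : 0 < t ^ (1-cExp) := Real.rpow_pos_of_pos ht _
  have p2 : 0 < (1+t) ^ (1-cExp) := Real.rpow_pos_of_pos (by linarith) _
  rw [show 2 * ((1+t)^(1-cExp))⁻¹ = 2/((1+t)^(1-cExp)) by ring,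
      show (t^(1-cExp))⁻¹ = 1/(t^(1-cExp)) by ring, div_lt_div_iff₀ p1 p2]
  linarith

lemma gfun_cont : Continuous gfun := by
  unfold gfun
  have h1 : Continuous fun t : ℝ => t ^ cExp := by
    rw [continuous_iff_continuousAt]
    intro x
    exact Real.continuousAt_rpow_const x cExp (Or.inr cExp_pos.le)
  have h2 : Continuous fun t : ℝ => (1+t) ^ cExp :=
    h1.comp (continuous_const.add continuous_id)
  continuity

lemma gfun_nonneg (t : ℝ) (h0 : 0 ≤ t) (h1 : t ≤ 1) : 0 ≤ gfun t := by
  rcases le_or_gt t tstar with hts | hts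
  · -- increasing on [0, tstar]
    have mono : StrictMonoOn gfun (Set.Icc 0 tstar) := by
      apply strictMonoOn_of_deriv_pos (convex_Icc 0 tstar) gfun_cont.continuousOn
      intro x hx
      rw [interior_Icc, Set.mem_Ioo] at hx
      rw [(gfun_hasDeriv x hx.1).deriv]
      have := comp_lt x hx.1 (by
        have : x * (Dc - 1) < 1 := by
          rw [← lt_div_iff₀ (by linarith [Dc_gt_two])]
          exact hx.2.trans_le (le_of_eq (by unfold tstar; ring))
        nlinarith)
      nlinarith [cExp_pos]
    have := mono.monotoneOn (Set.mem_Icc.mpr ⟨le_refl 0, tstar_pos.le⟩)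
      (Set.mem_Icc.mpr ⟨h0, hts⟩) h0
    rwa [gfun_zero] at this
  · -- decreasing on [tstar, 1]
    have anti : StrictAntiOn gfun (Set.Icc tstar 1) := by
      apply strictAntiOn_of_deriv_neg (convex_Icc tstar 1) gfun_cont.continuousOn
      intro x hx
      rw [interior_Icc, Set.mem_Ioo] at hx
      rw [(gfun_hasDeriv x (tstar_pos.trans hx.1)).deriv]
      have hxpos : 0 < x := tstar_pos.trans hx.1
      have := comp_gt x hxpos (by
        have h1x : 1 < x * (Dc - 1) := by
          rw [← div_lt_iff₀ (by linarith [Dc_gt_two])]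
          exact lt_of_le_of_lt (le_of_eq (by unfold tstar; ring)) hx.1
        nlinarith)
      nlinarith [cExp_pos]
    have := anti.antitoneOn (Set.mem_Icc.mpr ⟨hts.le, h1⟩)
      (Set.mem_Icc.mpr ⟨tstar_lt_one.le, le_refl 1⟩) h1
    rwa [gfun_one] at this

lemma key_ineq (a b : ℝ) (hb : 0 ≤ b) (hba : b ≤ a) :
    2 * (a+b) ^ cExp ≤ 2 * a ^ cExp + b ^ cExp := by
  rcases eq_or_lt_of_le (hb.trans hba) with ha | ha
  · have hb0 : b = 0 := le_antisymm (hba.trans_eq ha.symm) hb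
    rw [← ha, hb0]
    norm_num [Real.zero_rpow cExp_pos.ne']
  · set t := b / a with htdef
    have ht0 : 0 ≤ t := div_nonneg hb ha.le
    have ht1 : t ≤ 1 := (div_le_one ha).mpr hba
    have hg := gfun_nonneg t ht0 ht1
    unfold gfun at hg
    have hap : 0 < a ^ cExp := Real.rpow_pos_of_pos ha _
    have e1 : (a + b) ^ cExp = (1 + t) ^ cExp * a ^ cExp := by
      rw [← Real.mul_rpow (by linarith [div_nonneg hb ha.le]) ha.le]
      congr 1
      rw [htdef]
      field_simp
    have e2 : b ^ cExp = t ^ cExp * a ^ cExp := by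
      rw [← Real.mul_rpow ht0 ha.le]
      congr 1
      rw [htdef]
      field_simp
    rw [e1, e2]
    nlinarith

lemma cExp_eq : cExp = Real.logb 2 3 - 1 := rfl

def sums {k : ℕ} (Y : Finset (Fin k → Fin 2)) : Finset (Fin k → ℕ) :=
  (Finset.univ ×ˢ Y).image fun p => vsum p.1 p.2

lemma fin2_cases (a : Fin 2) : a = 0 ∨ a = 1 := by revert a; decide

lemma mem_sums {k : ℕ} {Y : Finset (Fin k → Fin 2)} {z : Fin k → ℕ} :
    z ∈ sums Y ↔ ∃ x y, y ∈ Y ∧ vsum x y = z := by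
  constructor
  · intro h
    obtain ⟨⟨x, y⟩, hmem, he⟩ := Finset.mem_image.mp h
    exact ⟨x, y, (Finset.mem_product.mp hmem).2, he⟩
  · rintro ⟨x, y, hy, he⟩
    exact Finset.mem_image.mpr ⟨(x, y), Finset.mem_product.mpr ⟨Finset.mem_univ _, hy⟩, he⟩

def fib {k : ℕ} (Y : Finset (Fin (k+1) → Fin 2)) (j : Fin 2) : Finset (Fin k → Fin 2) :=
  (Y.filter (fun y => y 0 = j)).image Fin.tail

lemma vsum_eq_cons {k : ℕ} (x y : Fin (k+1) → Fin 2) :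
    vsum x y = Fin.cons ((x 0 : ℕ) + (y 0 : ℕ)) (vsum (Fin.tail x) (Fin.tail y)) := by
  funext i
  refine Fin.cases ?_ (fun i => ?_) i <;> simp [vsum, Fin.tail]

lemma vsum_cons {k : ℕ} (a b : Fin 2) (x y : Fin k → Fin 2) :
    vsum (Fin.cons a x) (Fin.cons b y) = Fin.cons ((a:ℕ)+(b:ℕ)) (vsum x y) := by
  funext i
  refine Fin.cases ?_ (fun i => ?_) i <;> simp [vsum]

lemma fib_card_add {k : ℕ} (Y : Finset (Fin (k+1) → Fin 2)) :
    (fib Y 0).card + (fib Y 1).card = Y.card := by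
  have hinj : ∀ j : Fin 2, Set.InjOn (Fin.tail : (Fin (k+1) → Fin 2) → (Fin k → Fin 2))
      ↑(Y.filter (fun y => y 0 = j)) := by
    intro j y hy y' hy' h
    simp only [Finset.coe_filter, Set.mem_setOf_eq] at hy hy'
    have : Fin.cons (y 0) (Fin.tail y) = Fin.cons (y' 0) (Fin.tail y') := by
      rw [hy.2, hy'.2, h]
    rwa [Fin.cons_self_tail, Fin.cons_self_tail] at this
  have e0 : (fib Y 0).card = (Y.filter (fun y => y 0 = 0)).card :=
    Finset.card_image_of_injOn (hinj 0)
  have e1 : (fib Y 1).card = (Y.filter (fun y => y 0 = 1)).card :=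
    Finset.card_image_of_injOn (hinj 1)
  rw [e0, e1]
  have : (Y.filter (fun y => y 0 = 1)) = (Y.filter (fun y => ¬ (y 0 = 0))) := by
    apply Finset.filter_congr
    intro y _
    rcases fin2_cases (y 0) with h | h <;> simp [h]
  rw [this]
  exact Finset.card_filter_add_card_filter_not _

lemma sums_succ {k : ℕ} (Y : Finset (Fin (k+1) → Fin 2)) :
    sums Y = ((({0,1} : Finset ℕ) ×ˢ sums (fib Y 0)) ∪ (({1,2} : Finset ℕ) ×ˢ sums (fib Y 1))).image
      (fun p : ℕ × (Fin k → ℕ) => Fin.cons p.1 p.2) := by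
  ext z
  simp only [Finset.mem_image, Finset.mem_union, Finset.mem_product, Finset.mem_insert,
    Finset.mem_singleton]
  constructor
  · intro hz
    obtain ⟨x, y, hy, hxy⟩ := mem_sums.mp hz
    refine ⟨((x 0 : ℕ) + (y 0 : ℕ), vsum (Fin.tail x) (Fin.tail y)), ?_, ?_⟩
    · have htail : Fin.tail y ∈ fib Y (y 0) := by
        apply Finset.mem_image_of_mem
        exact Finset.mem_filter.mpr ⟨hy, rfl⟩
      have hmem : vsum (Fin.tail x) (Fin.tail y) ∈ sums (fib Y (y 0)) :=
        mem_sums.mpr ⟨Fin.tail x, Fin.tail y, htail, rfl⟩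
      rcases fin2_cases (y 0) with h' | h' <;> rw [h'] at hmem <;>
        rcases fin2_cases (x 0) with h'' | h''
      · exact Or.inl ⟨by rw [h', h'']; left; rfl, hmem⟩
      · exact Or.inl ⟨by rw [h', h'']; right; rfl, hmem⟩
      · exact Or.inr ⟨by rw [h', h'']; left; rfl, hmem⟩
      · exact Or.inr ⟨by rw [h', h'']; right; rfl, hmem⟩
    · rw [← hxy]
      exact (vsum_eq_cons x y).symm
  · rintro ⟨⟨v, w⟩, hmem, rfl⟩
    rcases hmem with ⟨hv, hw⟩ | ⟨hv, hw⟩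
    · obtain ⟨x', t', ht', hvs⟩ := mem_sums.mp hw
      obtain ⟨y, hy, hty⟩ := Finset.mem_image.mp ht'
      rw [Finset.mem_filter] at hy
      apply mem_sums.mpr
      refine ⟨Fin.cons (if v = 0 then 0 else 1) x', y, hy.1, ?_⟩
      have hyc : y = Fin.cons (0 : Fin 2) t' := by
        rw [← hy.2, ← hty, Fin.cons_self_tail]
      rw [hyc, vsum_cons, hvs]
      congr 1
      rcases hv with h | h <;> subst h <;> simp
    · obtain ⟨x', t', ht', hvs⟩ := mem_sums.mp hw
      obtain ⟨y, hy, hty⟩ := Finset.mem_image.mp ht'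
      rw [Finset.mem_filter] at hy
      apply mem_sums.mpr
      refine ⟨Fin.cons (if v = 1 then 0 else 1) x', y, hy.1, ?_⟩
      have hyc : y = Fin.cons (1 : Fin 2) t' := by
        rw [← hy.2, ← hty, Fin.cons_self_tail]
      rw [hyc, vsum_cons, hvs]
      congr 1
      rcases hv with h | h <;> subst h <;> simp

lemma cons_inj {k : ℕ} : Function.Injective (fun p : ℕ × (Fin k → ℕ) => (Fin.cons p.1 p.2 : Fin (k+1) → ℕ)) := by
  intro p q h
  obtain ⟨h1, h2⟩ := Fin.cons_injective2 h
  exact Prod.ext h1 h2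

lemma card_sums_succ {k : ℕ} (Y : Finset (Fin (k+1) → Fin 2)) :
    (sums Y).card = (sums (fib Y 0)).card + ((sums (fib Y 0)) ∪ (sums (fib Y 1))).card
      + (sums (fib Y 1)).card := by
  rw [sums_succ, Finset.card_image_of_injective _ cons_inj]
  set A := sums (fib Y 0)
  set B := sums (fib Y 1)
  have he : (({0,1} : Finset ℕ) ×ˢ A) ∪ (({1,2} : Finset ℕ) ×ˢ B)
      = (({0} : Finset ℕ) ×ˢ A) ∪ ((({1} : Finset ℕ) ×ˢ (A ∪ B)) ∪ (({2} : Finset ℕ) ×ˢ B)) := by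
    ext ⟨v, w⟩
    simp only [Finset.mem_union, Finset.mem_product, Finset.mem_insert, Finset.mem_singleton]
    tauto
  rw [he]
  have d1 : Disjoint (({1} : Finset ℕ) ×ˢ (A ∪ B)) (({2} : Finset ℕ) ×ˢ B) := by
    rw [Finset.disjoint_left]
    rintro ⟨v, w⟩ h1 h2
    simp only [Finset.mem_product, Finset.mem_singleton] at h1 h2
    omega
  have d2 : Disjoint (({0} : Finset ℕ) ×ˢ A)
      ((({1} : Finset ℕ) ×ˢ (A ∪ B)) ∪ (({2} : Finset ℕ) ×ˢ B)) := by
    rw [Finset.disjoint_left]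
    rintro ⟨v, w⟩ h1 h2
    simp only [Finset.mem_union, Finset.mem_product, Finset.mem_singleton] at h1 h2
    omega
  rw [Finset.card_union_of_disjoint d2, Finset.card_union_of_disjoint d1]
  simp only [Finset.card_product, Finset.card_singleton, one_mul]
  ring

lemma sums_lower : ∀ (k : ℕ) (Y : Finset (Fin k → Fin 2)), Y.Nonempty →
    (2:ℝ)^k * (Y.card:ℝ)^cExp ≤ ((sums Y).card : ℝ) := by
  intro k
  induction k with
  | zero =>
    intro Y hY
    have hcard : Y.card = 1 := le_antisymm (le_trans (Finset.card_le_univ Y) (by simp)) hY.card_pos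
    have hs : 0 < (sums Y).card := by
      apply Finset.card_pos.mpr
      exact Finset.Nonempty.image (Finset.Nonempty.product Finset.univ_nonempty hY) _
    rw [hcard]
    simp only [pow_zero, Nat.cast_one, Real.one_rpow, one_mul]
    exact_mod_cast hs
  | succ k ih =>
    intro Y hY
    set A := fib Y 0 with hA
    set B := fib Y 1 with hB
    have hm : A.card + B.card = Y.card := fib_card_add Y
    have h0 : (2:ℝ)^k * ((A.card:ℕ):ℝ)^cExp ≤ ((sums A).card : ℝ) := by
      rcases A.eq_empty_or_nonempty with h | h
      · rw [h]
        simp only [Finset.card_empty, Nat.cast_zero]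
        simp [Real.zero_rpow cExp_pos.ne']
      · exact ih A h
    have h1 : (2:ℝ)^k * ((B.card:ℕ):ℝ)^cExp ≤ ((sums B).card : ℝ) := by
      rcases B.eq_empty_or_nonempty with h | h
      · rw [h]
        simp only [Finset.card_empty, Nat.cast_zero]
        simp [Real.zero_rpow cExp_pos.ne']
      · exact ih B h
    have hcs := card_sums_succ Y
    have hu0 : ((sums A).card : ℝ) ≤ (((sums A) ∪ (sums B)).card : ℝ) := by
      exact_mod_cast Finset.card_le_card Finset.subset_union_left
    have hu1 : ((sums B).card : ℝ) ≤ (((sums A) ∪ (sums B)).card : ℝ) := by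
      exact_mod_cast Finset.card_le_card Finset.subset_union_right
    have hgoal : ((sums Y).card : ℝ)
        = ((sums A).card : ℝ) + (((sums A) ∪ (sums B)).card : ℝ) + ((sums B).card : ℝ) := by
      exact_mod_cast congrArg (Nat.cast (R := ℝ)) hcs
    rw [hgoal, ← hm]
    have hX : (0:ℝ) < 2^k := by positivity
    have hps : (2:ℝ)^(k+1) = 2^k * 2 := pow_succ 2 k
    rcases le_total ((B.card:ℕ) : ℝ) ((A.card:ℕ) : ℝ) with hcmp | hcmp
    · have hk := key_ineq ((A.card:ℕ):ℝ) ((B.card:ℕ):ℝ) (Nat.cast_nonneg _) hcmp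
      have := mul_le_mul_of_nonneg_left hk hX.le
      push_cast
      nlinarith
    · have hk := key_ineq ((B.card:ℕ):ℝ) ((A.card:ℕ):ℝ) (Nat.cast_nonneg _) hcmp
      have := mul_le_mul_of_nonneg_left hk hX.le
      push_cast
      rw [add_comm ((A.card:ℕ):ℝ)]
      nlinarith

lemma converse_count {k : ℕ} (φ1 : (Fin k → Fin 2) × (Fin k → Fin 2) → ℕ)
    (φ2 : (Fin k → Fin 2) → ℕ) (h : Admissible01 φ1 φ2) :
    (3:ℝ)^k ≤ (imCard1 φ1 : ℝ) * (imCard2 φ2 : ℝ) ^ cExp := by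
  obtain ⟨ψ, hψ⟩ := h
  set M1 := imCard1 φ1 with hM1
  set M2 := imCard2 φ2 with hM2
  have hM1pos : 0 < M1 := Finset.card_pos.mpr (Finset.Nonempty.image Finset.univ_nonempty _)
  set R : ℝ := ((M1:ℝ)/(2:ℝ)^k) ^ (cExp⁻¹) with hR
  -- per-class bound
  have hclass : ∀ t ∈ Finset.univ.image φ2,
      ((Finset.univ.filter (fun y => φ2 y = t)).card : ℝ) ≤ R := by
    intro t ht
    set Yt := Finset.univ.filter (fun y => φ2 y = t) with hYt
    have hYtne : Yt.Nonempty := by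
      obtain ⟨y, _, hy⟩ := Finset.mem_image.mp ht
      exact ⟨y, Finset.mem_filter.mpr ⟨Finset.mem_univ _, hy⟩⟩
    have hsub : sums Yt ⊆ (Finset.univ.image φ1).image (fun a => ψ a t) := by
      intro z hz
      obtain ⟨x, y, hy, hvz⟩ := mem_sums.mp hz
      have hyt : φ2 y = t := (Finset.mem_filter.mp hy).2
      apply Finset.mem_image.mpr
      refine ⟨φ1 (x, y), Finset.mem_image_of_mem _ (Finset.mem_univ _), ?_⟩
      rw [← hyt, hψ x y, hvz]
    have hcard : ((sums Yt).card : ℝ) ≤ (M1 : ℝ) := by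
      have := (Finset.card_le_card hsub).trans (Finset.card_image_le)
      exact_mod_cast this
    have hlow := sums_lower k Yt hYtne
    have h2k : (0:ℝ) < 2^k := by positivity
    have hle : ((Yt.card : ℝ)) ^ cExp ≤ (M1:ℝ)/(2:ℝ)^k := by
      rw [le_div_iff₀ h2k]
      calc (Yt.card:ℝ)^cExp * 2^k = 2^k * (Yt.card:ℝ)^cExp := by ring
      _ ≤ ((sums Yt).card : ℝ) := hlow
      _ ≤ (M1:ℝ) := hcard
    calc (Yt.card : ℝ) = (((Yt.card : ℝ)) ^ cExp) ^ (cExp⁻¹) := by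
          rw [← Real.rpow_mul (Nat.cast_nonneg _), mul_inv_cancel₀ cExp_pos.ne', Real.rpow_one]
    _ ≤ R := Real.rpow_le_rpow (Real.rpow_nonneg (Nat.cast_nonneg _) _) hle
        (inv_nonneg.mpr cExp_pos.le)
  -- aggregate over classes
  have hsum : ((2:ℝ))^k ≤ (M2 : ℝ) * R := by
    have hcardeq : (Finset.univ : Finset (Fin k → Fin 2)).card
        = ∑ t ∈ Finset.univ.image φ2, (Finset.univ.filter (fun y => φ2 y = t)).card :=
      Finset.card_eq_sum_card_image φ2 Finset.univ
    have huniv : ((Finset.univ : Finset (Fin k → Fin 2)).card : ℝ) = 2^k := by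
      rw [Finset.card_univ]
      simp [Fintype.card_fun]
    have : ((Finset.univ : Finset (Fin k → Fin 2)).card : ℝ)
        = ∑ t ∈ Finset.univ.image φ2, ((Finset.univ.filter (fun y => φ2 y = t)).card : ℝ) := by
      rw [hcardeq]; push_cast; ring
    rw [← huniv, this]
    calc ∑ t ∈ Finset.univ.image φ2, ((Finset.univ.filter (fun y => φ2 y = t)).card : ℝ)
        ≤ ∑ _t ∈ Finset.univ.image φ2, R := Finset.sum_le_sum hclass
    _ = (M2 : ℝ) * R := by rw [Finset.sum_const, hM2, imCard2]; ring
  -- raise to power cExp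
  have hRnn : (0:ℝ) ≤ R := Real.rpow_nonneg (by positivity) _
  have h2k : (0:ℝ) < 2^k := by positivity
  have hpow : ((2:ℝ)^k) ^ cExp ≤ ((M2:ℝ) * R) ^ cExp :=
    Real.rpow_le_rpow (by positivity) hsum cExp_pos.le
  have hRc : R ^ cExp = (M1:ℝ)/(2:ℝ)^k := by
    rw [hR, ← Real.rpow_mul (by positivity), inv_mul_cancel₀ cExp_pos.ne', Real.rpow_one]
  have hsplit : ((M2:ℝ) * R) ^ cExp = (M2:ℝ)^cExp * ((M1:ℝ)/(2:ℝ)^k) := by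
    rw [Real.mul_rpow (Nat.cast_nonneg _) hRnn, hRc]
  rw [hsplit] at hpow
  -- now (2^k)^cExp ≤ M2^cExp * M1 / 2^k ; multiply by 2^k
  have hmul := mul_le_mul_of_nonneg_left hpow h2k.le
  have hlhs : (2:ℝ)^k * ((2:ℝ)^k) ^ cExp = (3:ℝ)^k := by
    rw [← Real.rpow_natCast (2:ℝ) k, ← Real.rpow_mul (by norm_num : (0:ℝ) ≤ 2)]
    rw [← Real.rpow_add (by norm_num : (0:ℝ) < 2)]
    have : (k:ℝ) + (k:ℝ) * cExp = (k:ℝ) * Real.logb 2 3 := by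
      rw [cExp_eq]; ring
    rw [this, mul_comm, Real.rpow_mul (by norm_num : (0:ℝ) ≤ 2), Real.rpow_logb (by norm_num) (by norm_num) (by norm_num), Real.rpow_natCast]
  rw [hlhs] at hmul
  calc (3:ℝ)^k ≤ 2^k * ((M2:ℝ)^cExp * ((M1:ℝ)/2^k)) := hmul
  _ = (M1:ℝ) * (M2:ℝ)^cExp := by field_simp

lemma logb_inv_mul : Real.logb 3 2 * Real.logb 2 3 = 1 := by
  rw [Real.logb, Real.logb]
  have h2 : Real.log 2 ≠ 0 := ne_of_gt (Real.log_pos (by norm_num))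
  have h3 : Real.log 3 ≠ 0 := ne_of_gt (Real.log_pos (by norm_num))
  field_simp

lemma converse_rate (C1 C2 : ℝ) (hC : C2 ≤ C1) (hC2 : 0 < C2) {k : ℕ} (hk : 0 < k)
    (φ1 : (Fin k → Fin 2) × (Fin k → Fin 2) → ℕ) (φ2 : (Fin k → Fin 2) → ℕ)
    (adm : Admissible01 φ1 φ2) :
    rate01 C1 C2 φ1 φ2 ≤ (C1 - C2) * Real.logb 3 2 + C2 := by
  set cap := (C1 - C2) * Real.logb 3 2 + C2 with hcap
  have hl3 : (1:ℝ) < Real.logb 2 3 := by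
    have := Real.logb_lt_logb (b := 2) (by norm_num) (by norm_num : (0:ℝ) < 2)
      (by norm_num : (2:ℝ) < 3)
    simpa using this
  have hl32pos : 0 < Real.logb 3 2 := Real.logb_pos (by norm_num) (by norm_num)
  have hcExp : 0 ≤ cExp := by rw [cExp_eq]; linarith
  have hcappos : 0 < cap := by
    have : 0 ≤ (C1 - C2) * Real.logb 3 2 := mul_nonneg (by linarith) hl32pos.le
    rw [hcap]; linarith
  have hC1 : 0 < C1 := lt_of_lt_of_le hC2 hC
  have hcapmul : cap * Real.logb 2 3 = C1 + cExp * C2 := by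
    rw [hcap, cExp_eq, add_mul, mul_assoc, logb_inv_mul]
    ring
  -- image cards at least one
  have hM1pos : 0 < imCard1 φ1 := Finset.card_pos.mpr (Finset.Nonempty.image Finset.univ_nonempty _)
  have hM2pos : 0 < imCard2 φ2 := Finset.card_pos.mpr (Finset.Nonempty.image Finset.univ_nonempty _)
  set L1 := Real.logb 2 (imCard1 φ1) with hL1
  set L2 := Real.logb 2 (imCard2 φ2) with hL2
  have hL1nn : 0 ≤ L1 := Real.logb_nonneg (by norm_num) (by exact_mod_cast hM1pos)
  have hL2nn : 0 ≤ L2 := Real.logb_nonneg (by norm_num) (by exact_mod_cast hM2pos)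
  have hM2rpos : (0:ℝ) < (imCard2 φ2 : ℝ) := by exact_mod_cast hM2pos
  have hM1rpos : (0:ℝ) < (imCard1 φ1 : ℝ) := by exact_mod_cast hM1pos
  -- log form of converse_count
  have hcc := converse_count φ1 φ2 adm
  have hlog : (k:ℝ) * Real.logb 2 3 ≤ L1 + cExp * L2 := by
    have hstep := (Real.logb_le_logb (b := 2) (by norm_num)
      (by positivity) (by positivity)).mpr hcc
    rw [Real.logb_pow] at hstep
    have hsplit : Real.logb 2 ((imCard1 φ1 : ℝ) * (imCard2 φ2 : ℝ) ^ cExp)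
        = L1 + cExp * L2 := by
      rw [Real.logb_mul (ne_of_gt hM1rpos) (ne_of_gt (Real.rpow_pos_of_pos hM2rpos _))]
      congr 1
      rw [Real.logb, Real.log_rpow hM2rpos, hL2, Real.logb]
      ring
    rwa [hsplit] at hstep
  -- bound on N
  set N : ℤ := max ⌈L1 / C1⌉ ⌈L2 / C2⌉ with hN
  have hN1 : L1 / C1 ≤ (N:ℝ) := by
    refine le_trans (Int.le_ceil _) ?_
    exact_mod_cast le_max_left _ _
  have hN2 : L2 / C2 ≤ (N:ℝ) := by
    refine le_trans (Int.le_ceil _) ?_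
    exact_mod_cast le_max_right _ _
  have hNC1 : L1 ≤ (N:ℝ) * C1 := by
    rw [div_le_iff₀ hC1] at hN1; linarith
  have hNC2 : L2 ≤ (N:ℝ) * C2 := by
    rw [div_le_iff₀ hC2] at hN2; linarith
  have hNbig : (k:ℝ) * Real.logb 2 3 ≤ (N:ℝ) * (cap * Real.logb 2 3) := by
    rw [hcapmul]
    calc (k:ℝ) * Real.logb 2 3 ≤ L1 + cExp * L2 := hlog
    _ ≤ (N:ℝ) * C1 + cExp * ((N:ℝ) * C2) :=
        add_le_add hNC1 (mul_le_mul_of_nonneg_left hNC2 hcExp)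
    _ = (N:ℝ) * (C1 + cExp * C2) := by ring
  have hNk : (k:ℝ) / cap ≤ (N:ℝ) := by
    rw [div_le_iff₀ hcappos]
    have hl3pos : (0:ℝ) < Real.logb 2 3 := by linarith
    nlinarith
  have hNpos : (0:ℝ) < (N:ℝ) := by
    have : (0:ℝ) < (k:ℝ) / cap := by positivity
    linarith
  rw [rate01]
  rw [div_le_iff₀ (by exact_mod_cast hNpos)]
  calc (k:ℝ) = ((k:ℝ)/cap) * cap := by field_simp
  _ ≤ (N:ℝ) * cap := mul_le_mul_of_nonneg_right hNk hcappos.le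
  _ = cap * (N:ℝ) := by ring

section Code
variable (k j : ℕ) (hjk : j ≤ k)

noncomputable instance instEncP : Encodable ((Fin j → Fin 2) × (Fin (k-j) → Fin 3)) :=
  Fintype.toEncodable _
noncomputable instance instEncQ : Encodable (Fin j → Fin 2) := Fintype.toEncodable _

noncomputable def code1 : (Fin k → Fin 2) × (Fin k → Fin 2) → ℕ := fun p =>
  Encodable.encode
    ((fun i : Fin j => p.1 ⟨i.val, lt_of_lt_of_le i.isLt hjk⟩,
      fun i : Fin (k-j) =>
        (⟨(p.1 ⟨j + i.val, by omega⟩ : ℕ) + (p.2 ⟨j + i.val, by omega⟩ : ℕ), by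
          have h1 := (p.1 ⟨j + i.val, by omega⟩).isLt
          have h2 := (p.2 ⟨j + i.val, by omega⟩).isLt
          omega⟩ : Fin 3)) : (Fin j → Fin 2) × (Fin (k-j) → Fin 3))

noncomputable def code2 : (Fin k → Fin 2) → ℕ := fun y =>
  Encodable.encode (fun i : Fin j => y ⟨i.val, lt_of_lt_of_le i.isLt hjk⟩)

noncomputable def decoder : ℕ → ℕ → (Fin k → ℕ) := fun a b =>
  match Encodable.decode (α := (Fin j → Fin 2) × (Fin (k-j) → Fin 3)) a,
        Encodable.decode (α := Fin j → Fin 2) b with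
  | some p, some q => fun i =>
      if h : (i : ℕ) < j then (p.1 ⟨i, h⟩ : ℕ) + (q ⟨i, h⟩ : ℕ)
      else (p.2 ⟨(i:ℕ) - j, by have := i.isLt; omega⟩ : ℕ)
  | _, _ => fun _ => 0

lemma code_admissible : Admissible01 (code1 k j hjk) (code2 k j hjk) := by
  refine ⟨decoder k j hjk, fun x y => ?_⟩
  unfold code1 code2 decoder
  rw [Encodable.encodek, Encodable.encodek]
  funext i
  simp only []
  split_ifs with h
  · rfl
  · show ((x ⟨j + ((i:ℕ) - j), _⟩ : ℕ) + (y ⟨j + ((i:ℕ) - j), _⟩ : ℕ)) = vsum x y i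
    have hij : (⟨j + ((i:ℕ) - j), by have := i.isLt; omega⟩ : Fin k) = i :=
      Fin.ext (by simp; omega)
    rw [hij]
    rfl

lemma image_card_le {β : Type*} [Fintype β] {γ : Type*} [Fintype γ] [Encodable γ] (f : β → γ) :
    (Finset.univ.image (fun b => Encodable.encode (f b))).card ≤ Fintype.card γ := by
  classical
  have he : (fun b => Encodable.encode (f b)) = Encodable.encode ∘ f := rfl
  rw [he, ← Finset.image_image,
    Finset.card_image_of_injective _ Encodable.encode_injective]
  exact le_trans (Finset.card_le_univ _) (le_of_eq (Finset.card_univ))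

lemma code1_imcard : imCard1 (code1 k j hjk) ≤ 2^j * 3^(k-j) := by
  unfold imCard1 code1
  refine le_trans (image_card_le _) (le_of_eq ?_)
  simp [Fintype.card_fun]

lemma code2_imcard : imCard2 (code2 k j hjk) ≤ 2^j := by
  unfold imCard2 code2
  refine le_trans (image_card_le _) (le_of_eq ?_)
  simp [Fintype.card_fun]
end Code

lemma imCard1_pos {k : ℕ} (φ1 : (Fin k → Fin 2) × (Fin k → Fin 2) → ℕ) : 0 < imCard1 φ1 :=
  Finset.card_pos.mpr (Finset.Nonempty.image Finset.univ_nonempty _)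
lemma imCard2_pos {k : ℕ} (φ2 : (Fin k → Fin 2) → ℕ) : 0 < imCard2 φ2 :=
  Finset.card_pos.mpr (Finset.Nonempty.image Finset.univ_nonempty _)

lemma achievable (C1 C2 : ℝ) (hC : C2 ≤ C1) (hC2 : 0 < C2) (k : ℕ) (hk : 0 < k) :
    ∃ (φ1 : (Fin k → Fin 2) × (Fin k → Fin 2) → ℕ) (φ2 : (Fin k → Fin 2) → ℕ),
      Admissible01 φ1 φ2 ∧
      (k:ℝ) / ((k:ℝ)/((C1 - C2) * Real.logb 3 2 + C2) + (2 + 1/C2)) ≤ rate01 C1 C2 φ1 φ2 := by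
  have hC1 : 0 < C1 := lt_of_lt_of_le hC2 hC
  set l3 := Real.logb 2 3 with hl3def
  have hl3 : (1:ℝ) < l3 := by
    have := Real.logb_lt_logb (b := 2) (by norm_num) (by norm_num : (0:ℝ) < 2)
      (by norm_num : (2:ℝ) < 3)
    simpa [hl3def] using this
  have hl32pos : 0 < Real.logb 3 2 := Real.logb_pos (by norm_num) (by norm_num)
  have hinv : Real.logb 3 2 * l3 = 1 := by
    rw [hl3def, Real.logb, Real.logb]
    have h2 : Real.log 2 ≠ 0 := ne_of_gt (Real.log_pos (by norm_num))
    have h3 : Real.log 3 ≠ 0 := ne_of_gt (Real.log_pos (by norm_num))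
    field_simp
  set cap := (C1 - C2) * Real.logb 3 2 + C2 with hcap
  have hcapC2 : C2 ≤ cap := by
    have : 0 ≤ (C1 - C2) * Real.logb 3 2 := mul_nonneg (by linarith) hl32pos.le
    rw [hcap]; linarith
  have hcappos : 0 < cap := lt_of_lt_of_le hC2 hcapC2
  have hcapmul : cap * l3 = C1 + (l3 - 1) * C2 := by
    rw [hcap, add_mul, mul_assoc, hinv]
    ring
  set α := C2 / cap with hα
  have hα0 : 0 < α := div_pos hC2 hcappos
  have hα1 : α ≤ 1 := (div_le_one hcappos).mpr hcapC2
  set j := ⌈α * k⌉₊ with hj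
  have hjk : j ≤ k := Nat.ceil_le.mpr (by nlinarith [Nat.cast_nonneg (α := ℝ) k])
  refine ⟨code1 k j hjk, code2 k j hjk, code_admissible k j hjk, ?_⟩
  set M1 := imCard1 (code1 k j hjk) with hM1
  set M2 := imCard2 (code2 k j hjk) with hM2
  set L1 := Real.logb 2 (M1 : ℝ) with hL1
  set L2 := Real.logb 2 (M2 : ℝ) with hL2
  have hM1pos : (0:ℝ) < M1 := by exact_mod_cast imCard1_pos _
  have hM2pos : (0:ℝ) < M2 := by exact_mod_cast imCard2_pos _
  -- L1 bound
  have hL1le : L1 ≤ (j:ℝ) + ((k:ℝ) - (j:ℝ)) * l3 := by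
    have hcardle : (M1 : ℝ) ≤ ((2^j * 3^(k-j) : ℕ) : ℝ) := by
      exact_mod_cast code1_imcard k j hjk
    have := (Real.logb_le_logb (b := 2) (by norm_num) hM1pos
      (by positivity)).mpr hcardle
    refine le_trans this (le_of_eq ?_)
    push_cast
    rw [Real.logb_mul (by positivity) (by positivity), Real.logb_pow, Real.logb_pow]
    have h22 : Real.logb 2 2 = 1 := by simp
    rw [h22, ← hl3def]
    have : ((k - j : ℕ) : ℝ) = (k:ℝ) - (j:ℝ) := Nat.cast_sub hjk
    rw [this]
    ring
  -- L2 bound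
  have hL2le : L2 ≤ (j:ℝ) := by
    have hcardle : (M2 : ℝ) ≤ ((2^j : ℕ) : ℝ) := by
      exact_mod_cast code2_imcard k j hjk
    have := (Real.logb_le_logb (b := 2) (by norm_num) hM2pos
      (by positivity)).mpr hcardle
    refine le_trans this (le_of_eq ?_)
    push_cast
    rw [Real.logb_pow]
    simp
  -- j bounds
  have hjlow : α * k ≤ (j:ℝ) := Nat.le_ceil _
  have hjhigh : (j:ℝ) < α * k + 1 := Nat.ceil_lt_add_one (by positivity)
  -- ceil bounds
  have hceil1 : (⌈L1 / C1⌉ : ℝ) ≤ (k:ℝ)/cap + 1 := by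
    have hL1' : L1 ≤ (k:ℝ) * C1 / cap := by
      have e1 : (j:ℝ) + ((k:ℝ) - (j:ℝ)) * l3 = (k:ℝ) * l3 - (j:ℝ) * (l3 - 1) := by ring
      have e2 : (k:ℝ) * l3 - (j:ℝ) * (l3 - 1) ≤ (k:ℝ) * l3 - α * k * (l3 - 1) := by
        nlinarith
      have e3 : (k:ℝ) * l3 - α * k * (l3 - 1) = (k:ℝ) * C1 / cap := by
        rw [hα]
        have e4 : (k:ℝ) * l3 - (C2/cap) * k * (l3 - 1)
            = (k:ℝ) * (cap * l3 - (l3-1) * C2) / cap := by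
          field_simp
        rw [e4, hcapmul]
        ring_nf
      linarith [hL1le]
    have hdiv : L1 / C1 ≤ (k:ℝ)/cap := by
      have h5 : L1 / C1 ≤ ((k:ℝ) * C1 / cap) / C1 := by gcongr
      have h6 : ((k:ℝ) * C1 / cap) / C1 = (k:ℝ)/cap := by
        rw [div_right_comm, mul_div_cancel_right₀ _ hC1.ne']
      linarith [h5.trans_eq h6]
    linarith [Int.ceil_lt_add_one (L1 / C1)]
  have hceil2 : (⌈L2 / C2⌉ : ℝ) ≤ (k:ℝ)/cap + (1/C2 + 1) := by
    have hL2' : L2 / C2 ≤ (k:ℝ)/cap + 1/C2 := by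
      have : L2 ≤ α * k + 1 := by linarith
      have h2 : L2 / C2 ≤ (α * k + 1) / C2 := by gcongr
      refine le_trans h2 (le_of_eq ?_)
      rw [hα, add_div]
      congr 1
      rw [mul_comm, mul_div_assoc, div_right_comm, div_self hC2.ne']
      ring
    linarith [Int.ceil_lt_add_one (L2 / C2)]
  -- N positive
  have h2M1 : (2:ℝ) ≤ (M1:ℝ) := by
    have : 1 < M1 := by
      rw [hM1, imCard1]
      apply Finset.one_lt_card.mpr
      obtain ⟨ψ, hψ⟩ := code_admissible k j hjk
      refine ⟨code1 k j hjk (fun _ => 0, fun _ => 0),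
        Finset.mem_image_of_mem _ (Finset.mem_univ _),
        code1 k j hjk (fun _ => 1, fun _ => 0),
        Finset.mem_image_of_mem _ (Finset.mem_univ _), ?_⟩
      intro heq
      have h1 := hψ (fun _ => 0) (fun _ => 0)
      have h2 := hψ (fun _ => 1) (fun _ => 0)
      rw [heq] at h1
      rw [h1] at h2
      have := congrFun h2 ⟨0, hk⟩
      simp [vsum] at this
    exact_mod_cast this
  have hL1ge : (1:ℝ) ≤ L1 := by
    rw [hL1]
    calc (1:ℝ) = Real.logb 2 2 := by simp
    _ ≤ Real.logb 2 (M1:ℝ) := (Real.logb_le_logb (by norm_num) (by norm_num) hM1pos).mpr h2M1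
  have hNpos : 0 < max ⌈L1 / C1⌉ ⌈L2 / C2⌉ := by
    have : (0:ℝ) < L1 / C1 := by positivity
    exact lt_of_lt_of_le (Int.ceil_pos.mpr this) (le_max_left _ _)
  -- conclude
  rw [rate01]
  have hNR : ((max ⌈L1 / C1⌉ ⌈L2 / C2⌉ : ℤ) : ℝ) ≤ (k:ℝ)/cap + (2 + 1/C2) := by
    rw [Int.cast_max]
    apply max_le
    · have : (0:ℝ) < 1/C2 := by positivity
      linarith
    · linarith
  have hNRpos : (0:ℝ) < ((max ⌈L1 / C1⌉ ⌈L2 / C2⌉ : ℤ) : ℝ) := by exact_mod_cast hNpos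
  exact div_le_div_of_nonneg_left (Nat.cast_nonneg k) hNRpos hNR

theorem capacity_01 (C1 C2 : ℝ) (hC : C2 ≤ C1) (hC2 : 0 < C2) :
    sSup {r : ℝ | ∃ (k : ℕ), 0 < k ∧ ∃ (φ1 : (Fin k → Fin 2) × (Fin k → Fin 2) → ℕ)
      (φ2 : (Fin k → Fin 2) → ℕ),
      Admissible01 φ1 φ2 ∧ r = rate01 C1 C2 φ1 φ2} =
    (C1 - C2) * Real.logb 3 2 + C2 := by
  set cap := (C1 - C2) * Real.logb 3 2 + C2 with hcap
  set S := {r : ℝ | ∃ (k : ℕ), 0 < k ∧ ∃ (φ1 : (Fin k → Fin 2) × (Fin k → Fin 2) → ℕ)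
      (φ2 : (Fin k → Fin 2) → ℕ),
      Admissible01 φ1 φ2 ∧ r = rate01 C1 C2 φ1 φ2} with hS
  have hC1 : 0 < C1 := lt_of_lt_of_le hC2 hC
  have hl32pos : 0 < Real.logb 3 2 := Real.logb_pos (by norm_num) (by norm_num)
  have hcapC2 : C2 ≤ cap := by
    have : 0 ≤ (C1 - C2) * Real.logb 3 2 := mul_nonneg (by linarith) hl32pos.le
    rw [hcap]; linarith
  have hcappos : 0 < cap := lt_of_lt_of_le hC2 hcapC2
  have hub : ∀ r ∈ S, r ≤ cap := by
    rintro r ⟨k, hk, φ1, φ2, adm, rfl⟩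
    exact converse_rate C1 C2 hC hC2 hk φ1 φ2 adm
  have hbdd : BddAbove S := ⟨cap, fun r hr => hub r hr⟩
  set B : ℝ := 2 + 1/C2 with hB
  have hBpos : 0 < B := by positivity
  have hmem : ∀ k : ℕ, 0 < k → ∃ r ∈ S, (k:ℝ) / ((k:ℝ)/cap + B) ≤ r := by
    intro k hk
    obtain ⟨φ1, φ2, adm, hrate⟩ := achievable C1 C2 hC hC2 k hk
    exact ⟨rate01 C1 C2 φ1 φ2, ⟨k, hk, φ1, φ2, adm, rfl⟩, hrate⟩
  have hne : S.Nonempty := by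
    obtain ⟨r, hr, _⟩ := hmem 1 one_pos
    exact ⟨r, hr⟩
  apply le_antisymm
  · exact Real.sSup_le hub hcappos.le
  · by_contra hlt
    push_neg at hlt
    set ε := cap - sSup S with hε
    have hεpos : 0 < ε := by rw [hε]; linarith
    obtain ⟨k, hkgt⟩ := exists_nat_gt (B * cap^2 / ε)
    have hkpos : 0 < k := by
      by_contra hk0
      push_neg at hk0
      interval_cases k
      · simp only [Nat.cast_zero] at hkgt
        have : 0 < B * cap^2 / ε := by positivity
        linarith
    obtain ⟨r, hrS, hrge⟩ := hmem k hkpos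
    have hrle : r ≤ sSup S := le_csSup hbdd hrS
    -- show cap - ε < k/(k/cap + B), i.e. sSup S < k/(k/cap+B) ≤ r
    have hd : 0 < (k:ℝ)/cap + B := by positivity
    have hdc : ((k:ℝ)/cap + B) * cap = (k:ℝ) + B * cap := by
      field_simp
    have hBc : B * cap^2 < ε * (k:ℝ) := by
      rw [div_lt_iff₀ hεpos] at hkgt
      linarith [hkgt]
    have hkey : (cap - ε) * ((k:ℝ)/cap + B) < (k:ℝ) := by
      rw [← mul_lt_mul_iff_of_pos_right hcappos]
      have e1 : (cap - ε) * ((k:ℝ)/cap + B) * cap = (cap - ε) * ((k:ℝ) + B * cap) := by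
        rw [mul_assoc, hdc]
      rw [e1]
      nlinarith [mul_nonneg (mul_nonneg hεpos.le hBpos.le) hcappos.le]
    have : cap - ε < (k:ℝ) / ((k:ℝ)/cap + B) := by
      rw [lt_div_iff₀ hd]
      exact hkey
    have : sSup S < r := by
      rw [hε] at this
      calc sSup S = cap - (cap - sSup S) := by ring
      _ < (k:ℝ) / ((k:ℝ)/cap + B) := this
      _ ≤ r := hrge
    linarith
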